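/- If a guarded fixpoint category (C, ◇, †) satisfies the fixpoint identity, the parameter identity, the composition identity and the Bekič identity, then it also satisfies the double dagger identity, and hence is a guarded Conway category. -/

import Mathlib

open CategoryTheory CategoryTheory.Limits

universe v u

/-- If a guarded fixpoint operator satisfies the fixpoint, parameter, composition and
Bekič identities, then it also satisfies the double dagger identity, i.e. it is a
guarded Conway category. -/
theorem guardedConway_of_bekic {C : Type u} [Category.{v} C] [HasFiniteProducts C]
    (D : C ⥤ C) (p : 𝟭 C ⟶ D)
    (dag : ∀ {X Y : C}, (D.obj X ⨯ Y ⟶ X) → (Y ⟶ X))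
    -- (†) fixpoint identity
    (hfix : ∀ {X Y : C} (f : D.obj X ⨯ Y ⟶ X),
      dag f = prod.lift (dag f) (𝟙 Y) ≫ prod.map (p.app X) (𝟙 Y) ≫ f)
    -- (P) parameter identity
    (hparam : ∀ {X Y Z : C} (f : D.obj X ⨯ Y ⟶ X) (h : Z ⟶ Y),
      dag (prod.map (𝟙 (D.obj X)) h ≫ f) = h ≫ dag f)
    -- (C) composition identity
    (hcomp : ∀ {X Y Z : C} (f : D.obj X ⨯ Y ⟶ Z) (g : Z ⟶ X),
      dag (f ≫ g) = dag (prod.map (D.map g) (𝟙 Y) ≫ f) ≫ g)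
    -- (Bč) Bekič identity
    (hbekic : ∀ {X Y A : C} (f : D.obj X ⨯ (D.obj Y ⨯ A) ⟶ X) (g : D.obj X ⨯ (D.obj Y ⨯ A) ⟶ Y),
      dag (prod.lift (prod.fst ≫ D.map prod.fst)
            (prod.lift (prod.fst ≫ D.map prod.snd) prod.snd) ≫ prod.lift f g) =
      prod.lift
        (dag (prod.map (𝟙 (D.obj X))
              (prod.lift (dag (prod.lift (dag f ≫ p.app X) (𝟙 (D.obj Y ⨯ A)) ≫ g) ≫ p.app Y)
                (𝟙 A)) ≫ f))
        (dag (prod.lift (dag f ≫ p.app X) (𝟙 (D.obj Y ⨯ A)) ≫ g))) :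
    -- (††) double dagger identity
    ∀ {X Y : C} (f : D.obj X ⨯ (D.obj X ⨯ Y) ⟶ X),
      dag (dag f) = dag (prod.lift prod.fst (𝟙 (D.obj X ⨯ Y)) ≫ f) := by
  intro X Y f
  have key := congrArg (· ≫ (prod.snd : X ⨯ X ⟶ X)) (hbekic f f)
  simp only [Category.assoc, prod.lift_snd] at key
  -- rewrite the right-hand side using the fixpoint identity
  have hf : prod.lift (dag f ≫ p.app X) (𝟙 (D.obj X ⨯ Y)) ≫ f = dag f := by
    conv_rhs => rw [hfix f]
    rw [prod.lift_map_assoc, Category.comp_id]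
  rw [hf] at key
  -- rewrite the left-hand side using the composition identity
  have hpair : (prod.lift f f : D.obj X ⨯ (D.obj X ⨯ Y) ⟶ X ⨯ X)
      = f ≫ prod.lift (𝟙 X) (𝟙 X) := by simp
  have hcan : prod.map (D.map (prod.lift (𝟙 X) (𝟙 X))) (𝟙 Y) ≫
      prod.lift (prod.fst ≫ D.map prod.fst)
        (prod.lift (prod.fst ≫ D.map (prod.snd : X ⨯ X ⟶ X)) prod.snd)
      = prod.lift prod.fst (𝟙 (D.obj X ⨯ Y)) := by
    apply Limits.prod.hom_ext
    · simp only [Category.assoc, prod.lift_fst, prod.lift_snd, prod.map_fst_assoc, prod.map_snd_assoc, prod.map_fst, prod.map_snd, ← D.map_comp, Category.comp_id, D.map_id, Category.id_comp]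
    · apply Limits.prod.hom_ext <;> simp only [Category.assoc, prod.lift_fst, prod.lift_snd, prod.map_fst_assoc, prod.map_snd_assoc, prod.map_fst, prod.map_snd, ← D.map_comp, Category.comp_id, D.map_id, Category.id_comp]
  rw [hpair, ← Category.assoc, hcomp _ (prod.lift (𝟙 X) (𝟙 X)), Category.assoc,
    ← Category.assoc _ _ f, hcan] at key
  simpa [prod.lift_snd] using key.symm
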